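/- Let V be a real vector space and let ‖·‖ : V → [0,∞) be a weak norm (positively homogeneous, subadditive, vanishing only at 0). For each p ∈ [1,∞), the function ‖v‖^{(p)} := (½(‖v‖^p + ‖−v‖^p))^{1/p} is a genuine (symmetric) norm on V; in particular it is subadditive, symmetric under v ↦ −v, and absolutely homogeneous. -/

import Mathlib

/-- The `p`-symmetrisation `‖v‖^{(p)} = (½(‖v‖^p + ‖-v‖^p))^{1/p}` of a weak norm. -/
noncomputable def pSymmetrisation {V : Type*} [Neg V] (N : V → ℝ) (p : ℝ) : V → ℝ :=
  fun v => ((N v ^ p + N (-v) ^ p) / 2) ^ (1 / p)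

/-- Two-point Minkowski inequality. -/
lemma two_point_minkowski {p : ℝ} (hp : 1 ≤ p) {a b c d : ℝ}
    (ha : 0 ≤ a) (hb : 0 ≤ b) (hc : 0 ≤ c) (hd : 0 ≤ d) :
    ((a + b) ^ p + (c + d) ^ p) ^ (1 / p) ≤
      (a ^ p + c ^ p) ^ (1 / p) + (b ^ p + d ^ p) ^ (1 / p) := by
  have := Real.Lp_add_le_of_nonneg (s := (Finset.univ : Finset (Fin 2)))
    (f := ![a, c]) (g := ![b, d]) (p := p) hp
    (by intro i _; fin_cases i <;> simpa) (by intro i _; fin_cases i <;> simpa)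
  simpa [Fin.sum_univ_two] using this

/-- For a weak norm `N` on a real vector space and `p ∈ [1,∞)`, the
`p`-symmetrisation is a genuine (symmetric) norm: nonnegative, vanishing exactly at 0,
subadditive, symmetric under `v ↦ -v`, and absolutely homogeneous. -/
theorem stmt4 {V : Type*} [AddCommGroup V] [Module ℝ V] (N : V → ℝ)
    (h_nonneg : ∀ v, 0 ≤ N v)
    (h_zero : ∀ v, N v = 0 ↔ v = 0)
    (h_add : ∀ v w, N (v + w) ≤ N v + N w)
    (h_hom : ∀ (c : ℝ), 0 < c → ∀ v, N (c • v) = c * N v)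
    (p : ℝ) (hp : 1 ≤ p) :
    (∀ v, 0 ≤ pSymmetrisation N p v) ∧
    (∀ v, pSymmetrisation N p v = 0 ↔ v = 0) ∧
    (∀ v w, pSymmetrisation N p (v + w) ≤ pSymmetrisation N p v + pSymmetrisation N p w) ∧
    (∀ v, pSymmetrisation N p (-v) = pSymmetrisation N p v) ∧
    (∀ (c : ℝ) (v : V), pSymmetrisation N p (c • v) = |c| * pSymmetrisation N p v) := by
  have hp0 : 0 < p := lt_of_lt_of_le one_pos hp
  have hp0' : p ≠ 0 := ne_of_gt hp0
  have hN0 : N 0 = 0 := (h_zero 0).mpr rfl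
  have base_nonneg : ∀ v : V, 0 ≤ (N v ^ p + N (-v) ^ p) / 2 := fun v => by
    have := Real.rpow_nonneg (h_nonneg v) p
    have := Real.rpow_nonneg (h_nonneg (-v)) p
    positivity
  have nonneg : ∀ v : V, 0 ≤ pSymmetrisation N p v := fun v =>
    Real.rpow_nonneg (base_nonneg v) _
  refine ⟨nonneg, ?_, ?_, ?_, ?_⟩
  · -- zero iff
    intro v
    unfold pSymmetrisation
    rw [Real.rpow_eq_zero (base_nonneg v) (by positivity)]
    constructor
    · intro h
      have h1 : N v ^ p + N (-v) ^ p = 0 := by linarith [ (div_eq_zero_iff.mp h).resolve_right (by norm_num) ]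
      have hv : N v ^ p = 0 := by
        have := Real.rpow_nonneg (h_nonneg v) p
        have := Real.rpow_nonneg (h_nonneg (-v)) p
        linarith
      have : N v = 0 := by
        rcases Real.rpow_eq_zero_iff_of_nonneg (h_nonneg v) |>.mp hv with ⟨h', _⟩
        exact h'
      exact (h_zero v).mp this
    · rintro rfl
      simp [hN0, Real.zero_rpow hp0']
  · -- subadditive
    intro v w
    unfold pSymmetrisation
    have h1 : N (v + w) ^ p + N (-(v + w)) ^ p ≤ (N v + N w) ^ p + (N (-v) + N (-w)) ^ p := by
      have e : -(v + w) = -v + -w := by abel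
      gcongr
      · exact h_nonneg _
      · exact h_add v w
      · exact h_nonneg _
      · rw [e]; exact h_add (-v) (-w)
    have h2 : ((N (v+w) ^ p + N (-(v+w)) ^ p) / 2) ^ (1/p)
        ≤ (((N v + N w) ^ p + (N (-v) + N (-w)) ^ p) / 2) ^ (1/p) := by
      gcongr
      exact base_nonneg _
    refine h2.trans ?_
    have h3 := two_point_minkowski hp (h_nonneg v) (h_nonneg w) (h_nonneg (-v)) (h_nonneg (-w))
    have htwo : (0:ℝ) < (2:ℝ) ^ (1/p) := Real.rpow_pos_of_pos two_pos _
    have A : (0:ℝ) ≤ (N v + N w) ^ p + (N (-v) + N (-w)) ^ p :=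
      add_nonneg (Real.rpow_nonneg (add_nonneg (h_nonneg v) (h_nonneg w)) p)
        (Real.rpow_nonneg (add_nonneg (h_nonneg (-v)) (h_nonneg (-w))) p)
    have B : (0:ℝ) ≤ N v ^ p + N (-v) ^ p := by
      have := Real.rpow_nonneg (h_nonneg v) p
      have := Real.rpow_nonneg (h_nonneg (-v)) p
      linarith
    have C : (0:ℝ) ≤ N w ^ p + N (-w) ^ p := by
      have := Real.rpow_nonneg (h_nonneg w) p
      have := Real.rpow_nonneg (h_nonneg (-w)) p
      linarith
    rw [Real.div_rpow A (by norm_num), Real.div_rpow B (by norm_num),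
      Real.div_rpow C (by norm_num), ← add_div, div_le_div_iff_of_pos_right htwo]
    exact h3
  · -- symmetric
    intro v
    unfold pSymmetrisation
    rw [neg_neg, add_comm]
  · -- homogeneous
    have pos_case : ∀ (c : ℝ), 0 < c → ∀ v : V,
        pSymmetrisation N p (c • v) = c * pSymmetrisation N p v := by
      intro c hc v
      unfold pSymmetrisation
      have e1 : N (c • v) = c * N v := h_hom c hc v
      have e2 : N (-(c • v)) = c * N (-v) := by
        rw [show -(c • v) = c • (-v) by rw [smul_neg]]
        exact h_hom c hc (-v)
      rw [e1, e2, Real.mul_rpow hc.le (h_nonneg v), Real.mul_rpow hc.le (h_nonneg (-v))]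
      rw [show c ^ p * N v ^ p + c ^ p * N (-v) ^ p = c ^ p * (N v ^ p + N (-v) ^ p) by ring]
      rw [mul_div_assoc, Real.mul_rpow (Real.rpow_nonneg hc.le p) (base_nonneg v),
        ← Real.rpow_mul hc.le, mul_one_div, div_self hp0', Real.rpow_one]
    intro c v
    rcases lt_trichotomy c 0 with hc | hc | hc
    · have : c • v = (-c) • (-v) := by rw [smul_neg, neg_smul, neg_neg]
      rw [this, pos_case (-c) (by linarith) (-v), abs_of_neg hc]
      congr 1
      unfold pSymmetrisation
      rw [neg_neg, add_comm]
    · subst hc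
      rw [zero_smul, abs_zero, zero_mul]
      unfold pSymmetrisation
      simp [hN0, Real.zero_rpow hp0', Real.zero_rpow (inv_ne_zero hp0')]
    · rw [pos_case c hc v, abs_of_pos hc]
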